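/- For every oriented word u of rank k ≥ 2 and every reduced word g of rank k, τ_u(g) = τ_{u^{-1}}(g^rev), where g^rev is the reversal of g and u^{-1} is the inverse word of u. Consequently, the positive cone satisfies P_{u^{-1}} = (P_u)^rev. -/

import Mathlib

open FreeGroup

/-- A letter over the alphabet `{a_1,...,a_k, a_1⁻¹,...,a_k⁻¹}`:
`(i, true)` is the positive letter `a_i`, `(i, false)` is `a_i⁻¹`. -/
abbrev Letter (k : ℕ) := Fin k × Bool

/-- Formal inverse of a letter. -/
def invL {k : ℕ} (x : Letter k) : Letter k := (x.1, !x.2)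

/-- An oriented word of rank `k`: each of the `2k` letters appears exactly once. -/
def IsOriented {k : ℕ} (u : List (Letter k)) : Prop :=
  u.Nodup ∧ ∀ x : Letter k, x ∈ u

/-- `x` occurs to the left of `y` in `u`. -/
def leftOf {k : ℕ} (u : List (Letter k)) (x y : Letter k) : Prop :=
  u.idxOf x < u.idxOf y

instance {k : ℕ} (u : List (Letter k)) (x y : Letter k) : Decidable (leftOf u x y) :=
  inferInstanceAs (Decidable (_ < _))

/-- Number of occurrences of the two-letter word `xy` as a contiguous subword of `L`. -/
def cnt {k : ℕ} (L : List (Letter k)) (x y : Letter k) : ℕ :=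
  (L.zip L.tail).count (x, y)

/-- The case transition weight `α_u`, on a reduced word `L`. -/
noncomputable def alphaW {k : ℕ} (u L : List (Letter k)) : ℝ :=
  (∑ a : Fin k, ∑ b : Fin k,
      if leftOf u (a, false) (b, false) then (cnt L (a, true) (b, false) : ℝ) else 0)
  - ∑ a : Fin k, ∑ b : Fin k,
      if leftOf u (a, true) (b, true) then (cnt L (b, false) (a, true) : ℝ) else 0

/-- The letter transition weight `β_u`, on a reduced word `L`. -/
noncomputable def betaW {k : ℕ} (u L : List (Letter k)) : ℝ :=
  (∑ a : Fin k, ∑ b : Fin k,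
      if leftOf u (a, false) (b, true) then (cnt L (a, true) (b, true) : ℝ) else 0)
  - ∑ a : Fin k, ∑ b : Fin k,
      if leftOf u (a, false) (b, true) then (cnt L (b, false) (a, false) : ℝ) else 0

/-- The last letter weight `ω`, on a reduced word `L`. -/
noncomputable def omegaW {k : ℕ} (L : List (Letter k)) : ℝ :=
  match L.getLast? with
  | none => 0
  | some x => if x.2 then 1 / 2 else -(1 / 2)

/-- The weight `τ_u` induced by an oriented word `u`, evaluated on the reduced form. -/
noncomputable def tau {k : ℕ} (u : List (Letter k)) (g : FreeGroup (Fin k)) : ℝ :=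
  alphaW u g.toWord + betaW u g.toWord + omegaW g.toWord

/-- The weight contribution `wtc_u` of a reduced two-letter word `xy`. -/
noncomputable def wtc {k : ℕ} (u : List (Letter k)) (x y : Letter k) : ℝ :=
  if x.2 then (if leftOf u (x.1, false) y then 1 else 0)
  else (if leftOf u y (x.1, true) then -1 else 0)

/-- The inverse word of `u`. -/
def invWord {k : ℕ} (u : List (Letter k)) : List (Letter k) := (u.map invL).reverse

/-- A function `τ : G → ℝ` with small relative defect. -/
def SmallRelDefect {G : Type*} [Group G] (τ : G → ℝ) : Prop :=
  τ 1 = 0 ∧ ∀ g h : G, (g ≠ 1 ∨ h ≠ 1) → |τ g + τ h - τ (g * h)| < |τ g| + |τ h|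

-- auxiliary development
def Red' {k : ℕ} (L : List (Letter k)) : Prop :=
  List.Chain' (fun x y => y ≠ (x.1, !x.2)) L

noncomputable def S {k : ℕ} (u : List (Letter k)) : List (Letter k) → ℝ
  | x :: y :: t => wtc u x y + S u (y :: t)
  | _ => 0


lemma cnt_cons {k : ℕ} (x y a b : Letter k) (t : List (Letter k)) :
    (cnt (x :: y :: t) a b : ℝ) = cnt (y :: t) a b + (if (x, y) = (a, b) then (1:ℝ) else 0) := by
  by_cases h : (x, y) = (a, b) <;>
    simp [cnt, List.tail_cons, List.zip_cons_cons, List.count_cons, h, eq_comm]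

lemma deltaSum {k : ℕ} (P : Fin k → Fin k → Prop) [∀ a b, Decidable (P a b)] (xa ya : Fin k) :
    (∑ a : Fin k, ∑ b : Fin k, if P a b then (if xa = a ∧ ya = b then (1:ℝ) else 0) else 0)
      = if P xa ya then 1 else 0 := by
  have h : ∀ a b : Fin k, (if P a b then (if xa = a ∧ ya = b then (1:ℝ) else 0) else 0)
      = if b = ya then (if a = xa then (if P a b then (1:ℝ) else 0) else 0) else 0 := by
    intro a b
    by_cases h1 : a = xa <;> by_cases h2 : b = ya <;> by_cases h3 : P a b <;> simp_all <;> tauto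
  simp only [h, Finset.sum_ite_eq', Finset.mem_univ, if_true]

lemma deltaSum2 {k : ℕ} (P : Fin k → Fin k → Prop) [∀ a b, Decidable (P a b)] (xa ya : Fin k) :
    (∑ a : Fin k, ∑ b : Fin k, if P a b then (if xa = b ∧ ya = a then (1:ℝ) else 0) else 0)
      = if P ya xa then 1 else 0 := by
  rw [Finset.sum_comm]
  exact deltaSum (fun b a => P a b) xa ya

lemma neg_ite_real (c : Prop) [Decidable c] : (if c then (-1:ℝ) else 0) = -(if c then 1 else 0) := by
  split <;> simp

lemma AB {k : ℕ} (u : List (Letter k)) : ∀ L, alphaW u L + betaW u L = S u L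
  | [] => by simp [alphaW, betaW, S, cnt]
  | [x] => by simp [alphaW, betaW, S, cnt]
  | x :: y :: t => by
    have ih := AB u (y :: t)
    have hsplit : ∀ (c : Prop) [Decidable c] (A B : ℝ),
        (if c then A + B else 0) = (if c then A else 0) + (if c then B else 0) := by
      intros c _ A B; split <;> simp
    obtain ⟨xa, xb⟩ := x
    obtain ⟨ya, yb⟩ := y
    rw [show S u ((xa,xb) :: (ya,yb) :: t) = wtc u (xa,xb) (ya,yb) + S u ((ya,yb) :: t) from rfl,
      ← ih]
    simp only [alphaW, betaW, cnt_cons, hsplit, Finset.sum_add_distrib, Prod.mk.injEq]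
    cases xb <;> cases yb <;>
      simp only [wtc, Bool.false_eq_true, Bool.true_eq_false, if_true, if_false,
        and_true, and_false, false_and, true_and, ite_self, neg_ite_real,
        Finset.sum_const_zero, add_zero, zero_add] <;>
      [rw [deltaSum2]; rw [deltaSum2]; rw [deltaSum]; rw [deltaSum]] <;> ring


lemma beqEq {k : ℕ} : (instBEqProd : BEq (Letter k)) = instBEqOfDecidableEq := by
  have h : ∀ a b : Letter k, (a == b) = decide (a = b) := by
    intro a b; by_cases h : a = b <;> simp [h]
  show BEq.mk _ = BEq.mk _
  congr 1
  funext a b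
  exact h a b

lemma indexOf_reverse {α : Type*} [DecidableEq α] :
    ∀ (l : List α), l.Nodup → ∀ x ∈ l, l.reverse.idxOf x = l.length - 1 - l.idxOf x := by
  intro l
  induction l with
  | nil => intro _ x hx; simp at hx
  | cons a t ih =>
    intro hnd x hx
    rw [List.reverse_cons]
    rcases List.mem_cons.1 hx with rfl | hxt
    · have ha : x ∉ t.reverse := by
        simpa using (List.nodup_cons.1 hnd).1
      rw [List.idxOf_append_of_notMem ha]
      simp [List.idxOf_cons_self]
    · have hax : a ≠ x := by
        rintro rfl; exact (List.nodup_cons.1 hnd).1 hxt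
      rw [List.idxOf_append_of_mem (by simpa using hxt)]
      rw [ih (List.nodup_cons.1 hnd).2 x hxt]
      have hlt : t.idxOf x < t.length := List.idxOf_lt_length_iff.2 hxt
      rw [List.idxOf_cons]
      simp only [Bool.cond_eq_if, beq_iff_eq, if_neg hax, List.length_cons,
        List.length_reverse]
      omega

lemma invL_invL {k : ℕ} (x : Letter k) : invL (invL x) = x := by
  simp [invL]

lemma invL_injective {k : ℕ} : Function.Injective (invL (k := k)) :=
  Function.LeftInverse.injective invL_invL

lemma idxEq {k : ℕ} (l : List (Letter k)) (x : Letter k) :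
    @List.idxOf _ instBEqOfDecidableEq x l = l.idxOf x := by
  rw [show (instBEqProd : BEq (Letter k)) = instBEqOfDecidableEq from beqEq]

lemma indexOf_map_inj {α : Type*} [DecidableEq α] (f : α → α)
    (hf : Function.Injective f) (u : List α) (x : α) :
    (u.map f).idxOf (f x) = u.idxOf x := by
  induction u with
  | nil => rfl
  | cons a t ih =>
    simp only [List.map_cons, List.idxOf_cons, ih, Bool.cond_eq_if, beq_iff_eq]
    by_cases h : a = x
    · simp [h]
    · rw [if_neg (fun h' => h (hf h')), if_neg h]

lemma leftOf_invWord {k : ℕ} {u : List (Letter k)} (hu : IsOriented u) (p q : Letter k) :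
    leftOf (invWord u) p q ↔ leftOf u (invL q) (invL p) := by
  obtain ⟨hnd, hmem⟩ := hu
  have hnd' : (u.map invL).Nodup := hnd.map invL_injective
  have hmem' : ∀ z : Letter k, z ∈ u.map invL := fun z => by
    rw [← invL_invL z]; exact List.mem_map_of_mem (hmem _)
  have key : ∀ z : Letter k,
      @List.idxOf _ instBEqOfDecidableEq z (u.map invL).reverse
        = u.length - 1 - @List.idxOf _ instBEqOfDecidableEq (invL z) u := by
    intro z
    rw [indexOf_reverse _ hnd' z (hmem' z), ← indexOf_map_inj invL invL_injective u (invL z),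
      invL_invL, List.length_map]
  simp only [idxEq] at key
  have h1 : @List.idxOf _ instBEqOfDecidableEq (invL p) u < u.length :=
    by rw [idxEq]; exact List.idxOf_lt_length_iff.2 (hmem _)
  have h2 : @List.idxOf _ instBEqOfDecidableEq (invL q) u < u.length :=
    by rw [idxEq]; exact List.idxOf_lt_length_iff.2 (hmem _)
  simp only [idxEq] at h1 h2
  unfold leftOf invWord
  rw [key, key]
  omega

lemma leftOf_dichotomy {k : ℕ} {u : List (Letter k)} (hu : IsOriented u) {p q : Letter k}
    (h : p ≠ q) : leftOf u p q ↔ ¬ leftOf u q p := by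
  obtain ⟨hnd, hmem⟩ := hu
  have hij : @List.idxOf _ instBEqOfDecidableEq p u
      ≠ @List.idxOf _ instBEqOfDecidableEq q u :=
    fun hc => h ((List.idxOf_inj (hmem p)).1 (by rwa [idxEq, idxEq] at hc))
  simp only [idxEq] at hij
  unfold leftOf
  omega

noncomputable def fW {k : ℕ} (z : Letter k) : ℝ := if z.2 then 1/2 else -(1/2)

lemma wtc_rev {k : ℕ} {u : List (Letter k)} (hu : IsOriented u) {x y : Letter k}
    (h : y ≠ (x.1, !x.2)) :
    wtc (invWord u) y x = wtc u x y + fW y - fW x := by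
  obtain ⟨xa, xb⟩ := x
  obtain ⟨ya, yb⟩ := y
  cases xb <;> cases yb <;>
    simp only [wtc, fW, Bool.false_eq_true, Bool.true_eq_false, if_true, if_false,
      leftOf_invWord hu, invL, Bool.not_false, Bool.not_true]
  · -- x neg, y neg
    norm_num
  · -- x neg, y pos
    have hne : ((xa : Fin k), true) ≠ (ya, true) := by
      intro hc; exact h (by simp_all)
    simp only [leftOf_dichotomy hu hne]
    by_cases hc : leftOf u (ya, true) (xa, true) <;> simp [hc] <;> norm_num
  · -- x pos, y neg
    have hne : ((ya : Fin k), false) ≠ (xa, false) := by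
      simpa [invL] using h
    simp only [leftOf_dichotomy hu hne]
    by_cases hc : leftOf u (xa, false) (ya, false) <;> simp [hc] <;> norm_num
  · -- x pos, y pos
    norm_num

lemma S_append {k : ℕ} (u : List (Letter k)) (x z : Letter k) :
    ∀ R : List (Letter k), R.getLast? = some z → S u (R ++ [x]) = S u R + wtc u z x
  | [], h => by simp at h
  | [a], h => by
    simp only [List.getLast?_singleton, Option.some.injEq] at h
    subst h
    simp [S]
  | a :: b :: s, h => by
    have h' : (b :: s).getLast? = some z := by
      rwa [List.getLast?_cons_cons] at h
    have ih := S_append u x z (b :: s) h'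
    show wtc u a b + S u ((b :: s) ++ [x]) = wtc u a b + S u (b :: s) + wtc u z x
    rw [ih]; ring

lemma omegaW_concat {k : ℕ} (R : List (Letter k)) (x : Letter k) :
    omegaW (R ++ [x]) = fW x := by
  unfold omegaW fW
  rw [List.getLast?_concat]

lemma key_rev {k : ℕ} {u : List (Letter k)} (hu : IsOriented u) :
    ∀ L : List (Letter k), Red' L →
      S u L + omegaW L = S (invWord u) L.reverse + omegaW L.reverse
  | [], _ => by simp [S, omegaW]
  | [x], _ => by simp [S]
  | x :: y :: t, h => by
    have hxy : y ≠ (x.1, !x.2) := (List.isChain_cons_cons.1 h).1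
    have ih := key_rev hu (y :: t) (List.isChain_cons_cons.1 h).2
    have hgl : (y :: t).reverse.getLast? = some y := by
      rw [List.getLast?_reverse]; rfl
    have hrev : (x :: y :: t).reverse = (y :: t).reverse ++ [x] := by
      simp
    have homega : omegaW (x :: y :: t) = omegaW (y :: t) := by
      unfold omegaW
      rw [List.getLast?_cons_cons]
    have homegaR : omegaW ((y :: t).reverse) = fW y := by
      unfold omegaW fW
      rw [hgl]
    rw [hrev, S_append _ x y _ hgl, omegaW_concat, homega,
      show S u (x :: y :: t) = wtc u x y + S u (y :: t) from rfl,
      wtc_rev hu hxy]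
    have := homegaR
    linarith [ih]

lemma reduce_eq_self {k : ℕ} : ∀ L : List (Letter k), Red' L → FreeGroup.reduce L = L
  | [], _ => rfl
  | x :: t, h => by
    rw [FreeGroup.reduce.cons, reduce_eq_self t (List.isChain_cons.1 h).2]
    cases t with
    | nil => rfl
    | cons y s =>
      have hxy : y ≠ (x.1, !x.2) := (List.isChain_cons_cons.1 h).1
      have hno : ¬ (x.1 = y.1 ∧ x.2 = !y.2) := by
        rintro ⟨h1, h2⟩
        exact hxy (Prod.ext h1.symm (by rw [h2, Bool.not_not]))
      show (if x.1 = y.1 ∧ x.2 = !y.2 then s else x :: y :: s) = x :: y :: s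
      rw [if_neg hno]

lemma red'_toWord {k : ℕ} (g : FreeGroup (Fin k)) : Red' g.toWord := by
  by_contra hc
  rw [Red', List.Chain', List.isChain_iff_getElem] at hc
  push_neg at hc
  obtain ⟨i, hi, hbad⟩ := hc
  set L := g.toWord with hL
  have hi1 : i < L.length := by omega
  have hi2 : i + 1 < L.length := by omega
  have hdecomp : L = L.take i ++ (L[i].1, L[i].2) :: (L[i].1, !L[i].2) :: L.drop (i + 2) := by
    have h1 : L.drop i = L[i] :: L.drop (i + 1) := List.drop_eq_getElem_cons hi1
    have h2 : L.drop (i + 1) = L[i + 1] :: L.drop (i + 2) := List.drop_eq_getElem_cons hi2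
    have h3 : L[i + 1] = (L[i].1, !L[i].2) := by
      simpa [List.get_eq_getElem] using hbad
    conv_lhs => rw [← List.take_append_drop i L, h1, h2, h3]
  have hred : FreeGroup.reduce L
      = L.take i ++ (L[i].1, L[i].2) :: (L[i].1, !L[i].2) :: L.drop (i + 2) := by
    have hrd : FreeGroup.reduce L = L := FreeGroup.reduce_toWord g
    rw [hrd]
    exact hdecomp
  exact FreeGroup.reduce.not (p := False) hred

lemma red'_reverse {k : ℕ} {L : List (Letter k)} (h : Red' L) : Red' L.reverse := by
  unfold Red' at *
  simp only [List.Chain'] at *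
  rw [List.isChain_reverse]
  refine h.imp ?_
  intro a b hab hc
  apply hab
  rw [hc]
  simp [Bool.not_not]

lemma toWord_mk_reverse {k : ℕ} (g : FreeGroup (Fin k)) :
    (FreeGroup.mk g.toWord.reverse).toWord = g.toWord.reverse := by
  rw [FreeGroup.toWord_mk, reduce_eq_self _ (red'_reverse (red'_toWord g))]

lemma tau_part1 {k : ℕ} {u : List (Letter k)} (hu : IsOriented u) (g : FreeGroup (Fin k)) :
    tau u g = tau (invWord u) (FreeGroup.mk g.toWord.reverse) := by
  unfold tau
  rw [toWord_mk_reverse, AB, AB]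
  exact key_rev hu g.toWord (red'_toWord g)

theorem stmt13 {k : ℕ} (hk : 2 ≤ k) (u : List (Letter k)) (hu : IsOriented u) :
    (∀ g : FreeGroup (Fin k), tau u g = tau (invWord u) (FreeGroup.mk g.toWord.reverse))
    ∧ ∀ g : FreeGroup (Fin k),
        (0 < tau (invWord u) g
          ↔ ∃ h : FreeGroup (Fin k), 0 < tau u h ∧ g = FreeGroup.mk h.toWord.reverse) := by
  refine ⟨tau_part1 hu, fun g => ⟨fun hg => ?_, fun ⟨h, hh, hgh⟩ => ?_⟩⟩
  · refine ⟨FreeGroup.mk g.toWord.reverse, ?_, ?_⟩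
    · rw [tau_part1 hu, toWord_mk_reverse, List.reverse_reverse, FreeGroup.mk_toWord]
      exact hg
    · rw [toWord_mk_reverse, List.reverse_reverse, FreeGroup.mk_toWord]
  · rw [hgh, ← tau_part1 hu]
    exact hh
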